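/- Let T = (V, E) be a finite tree with base vertex v₀, x ∈ ℂ^V, and for ε ∈ {±1}^E define x_v(ε) = (∏_{e ∈ P_v} ε_e)·x_v, where P_v is the unique path from v₀ to v. Let q = exp(π√-1/r) for a positive integer r. Then Σ_{ε ∈ {±1}^E} (∏_{e ∈ E} ε_e) · ∏_{e={u,v} ∈ E} q^{x_u(ε)·x_v(ε)} = ∏_{e={u,v} ∈ E} (q^{x_u x_v} - q^{-x_u x_v}). -/

import Mathlib

open Complex

/-- `q^z = exp(π √-1 z / r)`. -/
noncomputable def qpow (r : ℕ) (z : ℂ) : ℂ := Complex.exp (Real.pi * Complex.I * z / r)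

/-- `{z} = q^z - q^{-z}`. -/
noncomputable def br (r : ℕ) (z : ℂ) : ℂ := qpow r z - qpow r (-z)

/-- The symmetric function `{u,v} ↦ g u * g v` on unordered pairs. -/
noncomputable def sym2mul {V : Type*} (g : V → ℂ) : Sym2 V → ℂ :=
  Sym2.lift ⟨fun a b => g a * g b, fun a b => mul_comm (g a) (g b)⟩

lemma list_prod_sq (m : List ℂ) (h : ∀ a ∈ m, a = 1 ∨ a = -1) : m.prod * m.prod = 1 := by
  induction m with
  | nil => simp
  | cons a l ih =>
    have ha := h a (by simp)
    have hl := ih (fun b hb => h b (by simp [hb]))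
    have key : (a * l.prod) * (a * l.prod) = (a * a) * (l.prod * l.prod) := by ring
    rw [List.prod_cons, key, hl]
    rcases ha with ha | ha <;> rw [ha] <;> ring

theorem stmt11 (r : ℕ) (hr : 0 < r) {V : Type*} [Fintype V] [DecidableEq V]
    (G : SimpleGraph V) [DecidableRel G.Adj] (hT : G.IsTree) (v₀ : V) (x : V → ℂ)
    (X : (↥G.edgeSet → Bool) → V → ℂ)
    (hX : ∀ (ε : ↥G.edgeSet → Bool) (v : V) (p : G.Walk v₀ v), p.IsPath →
      X ε v =
        (p.edges.map (fun e =>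
          if h : e ∈ G.edgeSet then (if ε ⟨e, h⟩ then (1 : ℂ) else -1) else 1)).prod * x v) :
    ∑ ε : ↥G.edgeSet → Bool,
        (∏ e : ↥G.edgeSet, (if ε e then (1 : ℂ) else -1)) *
          ∏ e ∈ G.edgeFinset, qpow r (sym2mul (X ε) e) =
      ∏ e ∈ G.edgeFinset, (qpow r (sym2mul x e) - qpow r (-(sym2mul x e))) := by
  classical
  set f : (↥G.edgeSet → Bool) → Sym2 V → ℂ := fun ε e =>
    if h : e ∈ G.edgeSet then (if ε ⟨e, h⟩ then (1 : ℂ) else -1) else 1 with hf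
  have hfpm : ∀ ε e, f ε e = 1 ∨ f ε e = -1 := by
    intro ε e
    simp only [hf]
    split
    · split <;> simp
    · left; rfl
  -- key lemma
  have key : ∀ (ε : ↥G.edgeSet → Bool) (e : ↥G.edgeSet),
      sym2mul (X ε) e.val = (if ε e then (1:ℂ) else -1) * sym2mul x e.val := by
    rintro ε ⟨E, hE⟩
    induction E with
    | _ u v =>
      have h : G.Adj u v := hE
      obtain ⟨p, hp, -⟩ := hT.existsUnique_path v₀ u
      by_cases hv : v ∈ p.support
      · -- v on path to u; p = (takeUntil) ++ single edge
        have hq : (p.takeUntil v hv).IsPath := hp.takeUntil hv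
        have hd : (p.dropUntil v hv).IsPath := hp.dropUntil hv
        have hs : (SimpleGraph.Walk.cons h.symm SimpleGraph.Walk.nil : G.Walk v u).IsPath :=
          (SimpleGraph.Path.singleton h.symm).2
        have hdu : p.dropUntil v hv = SimpleGraph.Walk.cons h.symm SimpleGraph.Walk.nil :=
          (hT.existsUnique_path v u).unique hd hs
        have hedges : p.edges = (p.takeUntil v hv).edges ++ [s(u,v)] := by
          conv_lhs => rw [← p.take_spec hv]
          rw [SimpleGraph.Walk.edges_append, hdu]
          simp [Sym2.eq_swap]
        have hXu := hX ε u p hp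
        have hXv := hX ε v (p.takeUntil v hv) hq
        have hfe : f ε s(u,v) = (if ε ⟨s(u,v), hE⟩ then (1:ℂ) else -1) := by
          simp only [hf, dif_pos hE]
        have hsq : ((p.takeUntil v hv).edges.map (f ε)).prod *
            ((p.takeUntil v hv).edges.map (f ε)).prod = 1 := by
          apply list_prod_sq
          intro a ha
          obtain ⟨b, -, rfl⟩ := List.mem_map.mp ha
          exact hfpm ε b
        rw [hedges] at hXu
        simp only [List.map_append, List.prod_append, List.map_cons, List.map_nil,
          List.prod_cons, List.prod_nil, mul_one] at hXu
        simp only [dif_pos hE] at hXu hXv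
        simp only [sym2mul, Sym2.lift_mk, hXu, hXv]
        linear_combination (if ε ⟨s(u,v), hE⟩ then (1:ℂ) else -1) * x u * x v * hsq
      · -- extend p by the edge
        have hw : (p.concat h).IsPath := by
          rw [SimpleGraph.Walk.isPath_def, SimpleGraph.Walk.support_concat]
          simp [List.concat_eq_append, List.nodup_append, hp.support_nodup, hv]
          intro a ha hav
          subst hav
          exact hv ha
        have hXu := hX ε u p hp
        have hXv := hX ε v (p.concat h) hw
        have hfe : f ε s(u,v) = (if ε ⟨s(u,v), hE⟩ then (1:ℂ) else -1) := by
          simp only [hf, dif_pos hE]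
        have hsq : (p.edges.map (f ε)).prod * (p.edges.map (f ε)).prod = 1 := by
          apply list_prod_sq
          intro a ha
          obtain ⟨b, -, rfl⟩ := List.mem_map.mp ha
          exact hfpm ε b
        rw [SimpleGraph.Walk.edges_concat] at hXv
        simp only [List.concat_eq_append, List.map_append, List.prod_append, List.map_cons,
          List.map_nil, List.prod_cons, List.prod_nil, mul_one] at hXv
        simp only [dif_pos hE] at hXu hXv
        simp only [sym2mul, Sym2.lift_mk, hXu, hXv]
        linear_combination (if ε ⟨s(u,v), hE⟩ then (1:ℂ) else -1) * x u * x v * hsq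
  -- now the algebraic expansion
  have hconv : ∀ (F : Sym2 V → ℂ), ∏ e ∈ G.edgeFinset, F e = ∏ e : ↥G.edgeSet, F e.val := by
    intro F
    rw [Finset.prod_subtype G.edgeFinset (fun e => SimpleGraph.mem_edgeFinset) F]
  calc ∑ ε : ↥G.edgeSet → Bool,
        (∏ e : ↥G.edgeSet, (if ε e then (1 : ℂ) else -1)) *
          ∏ e ∈ G.edgeFinset, qpow r (sym2mul (X ε) e)
      = ∑ ε : ↥G.edgeSet → Bool, ∏ e : ↥G.edgeSet,
          ((if ε e then (1:ℂ) else -1) * qpow r ((if ε e then (1:ℂ) else -1) * sym2mul x e.val)) := by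
        refine Finset.sum_congr rfl fun ε _ => ?_
        rw [hconv, ← Finset.prod_mul_distrib]
        exact Finset.prod_congr rfl fun e _ => by rw [key ε e]
    _ = ∏ e : ↥G.edgeSet, ∑ b : Bool,
          ((if b then (1:ℂ) else -1) * qpow r ((if b then (1:ℂ) else -1) * sym2mul x e.val)) := by
        rw [Finset.prod_univ_sum]
        rw [Fintype.piFinset_univ]
    _ = ∏ e ∈ G.edgeFinset, (qpow r (sym2mul x e) - qpow r (-(sym2mul x e))) := by
        rw [hconv]
        refine Finset.prod_congr rfl fun e _ => ?_
        simp [Fintype.sum_bool, neg_one_mul]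
        ring
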